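/- Let b, x > 0. If a < 0 is a zero of a ↦ M(a,b,x), then it is a simple zero, i.e., ∂M/∂a(a,b,x) ≠ 0. Indeed, ∫₀ˣ t^{b-1}e^{-t}M(a,b,t)²dt = -x^b e^{-x} · (∂/∂a)M(a,b,x) · (∂/∂x)M(a,b,x). -/

import Mathlib

/-- The Kummer confluent hypergeometric function `M(a,b,x)`, real parameters. -/
noncomputable def kummerM (a b x : ℝ) : ℝ :=
  ∑' n : ℕ, (ascPochhammer ℝ n).eval a / ((ascPochhammer ℝ n).eval b * n.factorial) * x ^ n

open Polynomial Set

namespace KummerAux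

noncomputable def P (n : ℕ) (y : ℝ) : ℝ := (ascPochhammer ℝ n).eval y
noncomputable def Pd (n : ℕ) (y : ℝ) : ℝ := ((ascPochhammer ℝ n).derivative).eval y

lemma P_zero (y : ℝ) : P 0 y = 1 := by simp [P]

lemma P_succ (n : ℕ) (y : ℝ) : P (n+1) y = P n y * (y + n) := by
  simp [P, ascPochhammer_succ_right]

lemma Pd_zero (y : ℝ) : Pd 0 y = 0 := by simp [Pd]

lemma Pd_succ (n : ℕ) (y : ℝ) : Pd (n+1) y = Pd n y * (y + n) + P n y := by
  simp only [Pd, P, ascPochhammer_succ_right, Polynomial.derivative_mul, Polynomial.derivative_add, Polynomial.eval_mul,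
    Polynomial.eval_add, Polynomial.eval_X, Polynomial.derivative_X, Polynomial.eval_natCast,
    Polynomial.eval_one, Polynomial.derivative_natCast, Polynomial.eval_zero]
  ring

lemma hasDerivAt_P (n : ℕ) (y : ℝ) : HasDerivAt (fun z => P n z) (Pd n y) y :=
  Polynomial.hasDerivAt _ y

lemma P_pos {b : ℝ} (hb : 0 < b) (n : ℕ) : 0 < P n b := by
  induction n with
  | zero => simp [P_zero]
  | succ n ih => rw [P_succ]; positivity

lemma abs_P_le (n : ℕ) (y : ℝ) : |P n y| ≤ (|y| + n) ^ n := by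
  induction n with
  | zero => simp [P_zero]
  | succ n ih =>
    rw [P_succ, abs_mul]
    have h1 : |y + (n:ℝ)| ≤ |y| + (n+1) := by
      calc |y + (n:ℝ)| ≤ |y| + n := abs_add_le _ _ |>.trans (by simp [Nat.abs_cast])
      _ ≤ |y| + (n+1) := by linarith
    have h2 : (|y| + (n:ℝ)) ^ n ≤ (|y| + (n+1)) ^ n :=
      pow_le_pow_left₀ (by positivity) (by linarith) n
    calc |P n y| * |y + (n:ℝ)| ≤ (|y| + n)^n * (|y| + (n+1)) := by
          apply mul_le_mul ih _ (abs_nonneg _) (by positivity)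
          exact h1.trans (by push_cast; ring_nf; exact le_rfl)
      _ ≤ (|y| + (n+1))^n * (|y| + (n+1)) := by
          apply mul_le_mul_of_nonneg_right h2 (by positivity)
      _ = (|y| + ((n:ℝ)+1))^(n+1) := by ring
      _ = (|y| + ((n+1:ℕ):ℝ))^(n+1) := by push_cast; ring

lemma abs_Pd_le (n : ℕ) (y : ℝ) : |Pd n y| ≤ n * (|y| + n) ^ n := by
  induction n with
  | zero => simp [Pd_zero]
  | succ n ih =>
    rw [Pd_succ]
    have hy : (0:ℝ) ≤ |y| := abs_nonneg y
    have h0 : |y + (n:ℝ)| ≤ |y| + n := (abs_add_le _ _).trans (by simp [Nat.abs_cast])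
    have h2 : (|y| + (n:ℝ)) ^ n ≤ (|y| + n + 1) ^ n :=
      pow_le_pow_left₀ (by positivity) (by linarith) n
    have hP := abs_P_le n y
    calc |Pd n y * (y + n) + P n y| ≤ |Pd n y| * |y + (n:ℝ)| + |P n y| := by
          refine (abs_add_le _ _).trans ?_; rw [abs_mul]
      _ ≤ (n * (|y| + n)^n) * (|y| + n) + (|y| + n)^n := by
          gcongr <;> first | exact ih | exact h0 | exact hP
      _ ≤ ((n:ℝ)+1) * (|y| + n + 1)^(n+1) := by
          have h3 : (|y| + (n:ℝ))^(n+1) ≤ (|y| + n + 1)^(n+1) :=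
            pow_le_pow_left₀ (by positivity) (by linarith) _
          have h4 : (n : ℝ) * (|y| + n)^n * (|y| + n) = n * (|y|+n)^(n+1) := by ring
          have h5 : (|y| + (n:ℝ))^n ≤ (|y| + n + 1)^(n+1) := by
            calc (|y| + (n:ℝ))^n ≤ (|y| + n + 1)^n :=
                  pow_le_pow_left₀ (by positivity) (by linarith) n
              _ ≤ (|y| + n + 1)^(n+1) := by
                  apply pow_le_pow_right₀ (by linarith) (by omega)
          calc (n:ℝ) * (|y| + n)^n * (|y| + n) + (|y| + n)^n
              ≤ (n:ℝ) * (|y| + n + 1)^(n+1) + (|y| + n + 1)^(n+1) := by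
                rw [h4]; gcongr
            _ = ((n:ℝ)+1) * (|y| + n + 1)^(n+1) := by ring
      _ = ((n+1:ℕ):ℝ) * (|y| + ((n+1:ℕ):ℝ))^(n+1) := by push_cast; ring_nf

lemma P_fact_le {b : ℝ} (hb : 0 < b) (k : ℕ) : b * (k.factorial : ℝ) ≤ P (k+1) b := by
  induction k with
  | zero => simp [P_succ, P_zero]
  | succ k ih =>
    rw [P_succ]
    have h1 : (0:ℝ) < P (k+1) b := P_pos hb _
    have h2 : ((k:ℝ)+1) ≤ b + (k+1) := by linarith
    calc b * ((k+1).factorial : ℝ) = (b * k.factorial) * ((k:ℝ)+1) := by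
          rw [Nat.factorial_succ]; push_cast; ring
      _ ≤ P (k+1) b * (b + ((k+1:ℕ):ℝ)) := by
          apply mul_le_mul ih _ (by positivity) h1.le
          push_cast; linarith

lemma nat_le_two_pow (n : ℕ) : (n : ℝ) ≤ 2 ^ n := by
  have := Nat.lt_two_pow_self (n := n)
  exact_mod_cast this.le

lemma pow_self_le (n : ℕ) : (n : ℝ) ^ n ≤ 3 ^ n * n.factorial := by
  induction n with
  | zero => simp
  | succ n ih =>
    have key : ((n:ℝ) + 1) ^ n ≤ 3 * (n:ℝ)^n := by
      rcases Nat.eq_zero_or_pos n with h | h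
      · subst h; norm_num
      · have hn : (0:ℝ) < n := by exact_mod_cast h
        have h1 : (n:ℝ) + 1 ≤ n * Real.exp (1/n) := by
          have := Real.add_one_le_exp (1/(n:ℝ))
          calc (n:ℝ) + 1 = n * (1/n + 1) := by field_simp; ring
            _ ≤ n * Real.exp (1/n) := by
                apply mul_le_mul_of_nonneg_left this hn.le
        calc ((n:ℝ)+1)^n ≤ ((n:ℝ) * Real.exp (1/n))^n :=
              pow_le_pow_left₀ (by positivity) h1 n
          _ = (n:ℝ)^n * Real.exp (1/n) ^ n := by rw [mul_pow]
          _ = (n:ℝ)^n * Real.exp 1 := by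
              rw [← Real.exp_nat_mul]
              congr 1
              field_simp
          _ ≤ (n:ℝ)^n * 3 := by
              have : Real.exp 1 ≤ 3 := by
                have := Real.exp_one_lt_d9
                linarith
              exact mul_le_mul_of_nonneg_left this (by positivity)
          _ = 3 * (n:ℝ)^n := by ring
    calc ((n+1:ℕ):ℝ)^(n+1) = ((n:ℝ)+1) * ((n:ℝ)+1)^n := by push_cast; ring
      _ ≤ ((n:ℝ)+1) * (3 * (n:ℝ)^n) := by
          apply mul_le_mul_of_nonneg_left key (by positivity)
      _ ≤ ((n:ℝ)+1) * (3 * (3^n * n.factorial)) := by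
          have : (3:ℝ) * (n:ℝ)^n ≤ 3 * (3^n * n.factorial) := by linarith
          exact mul_le_mul_of_nonneg_left this (by positivity)
      _ = 3^(n+1) * (((n:ℝ)+1) * n.factorial) := by ring
      _ = 3^(n+1) * ((n+1).factorial : ℝ) := by rw [Nat.factorial_succ]; push_cast; ring


/-! ### Majorized coefficient sequences and their power series -/

def Maj (e : ℕ → ℝ) (D C : ℝ) : Prop :=
  0 ≤ D ∧ 0 ≤ C ∧ ∀ n, |e n| ≤ D * C ^ n / (n-1).factorial

def sh (e : ℕ → ℝ) : ℕ → ℝ := fun n => ((n:ℝ)+1) * e (n+1)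

noncomputable def S (e : ℕ → ℝ) (t : ℝ) : ℝ := ∑' n, e n * t ^ n

lemma summable_base (D K : ℝ) (hK : 0 ≤ K) :
    Summable (fun n : ℕ => D * K ^ n / (n-1).factorial) := by
  rw [← summable_nat_add_iff 1]
  have h := (Real.summable_pow_div_factorial K).mul_left (D * K)
  refine h.congr fun n => ?_
  simp only [Nat.add_sub_cancel]
  rw [pow_succ]
  ring

lemma Maj.summable {e : ℕ → ℝ} {D C : ℝ} (h : Maj e D C) {R : ℝ} (hR : 0 ≤ R) :
    Summable (fun n => |e n| * R ^ n) := by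
  obtain ⟨hD, hC, hb⟩ := h
  refine Summable.of_nonneg_of_le (fun n => by positivity) (fun n => ?_)
    (summable_base D (C * R) (by positivity))
  calc |e n| * R ^ n ≤ (D * C ^ n / (n-1).factorial) * R ^ n := by
        exact mul_le_mul_of_nonneg_right (hb n) (by positivity)
    _ = D * (C*R) ^ n / (n-1).factorial := by rw [mul_pow]; ring

lemma Maj.summable_S {e : ℕ → ℝ} {D C : ℝ} (h : Maj e D C) (t : ℝ) :
    Summable (fun n => e n * t ^ n) := by
  apply Summable.of_abs
  refine (h.summable (abs_nonneg t)).congr fun n => ?_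
  rw [abs_mul, abs_pow]

lemma Maj.sh {e : ℕ → ℝ} {D C : ℝ} (h : Maj e D C) :
    Maj (KummerAux.sh e) (2*D*C + D) (2*C) := by
  obtain ⟨hD, hC, hb⟩ := h
  refine ⟨by positivity, by positivity, fun n => ?_⟩
  have h1 : |KummerAux.sh e n| = ((n:ℝ)+1) * |e (n+1)| := by
    rw [KummerAux.sh, abs_mul, abs_of_nonneg (by positivity : (0:ℝ) ≤ (n:ℝ)+1)]
  rw [h1]
  have h2 := hb (n+1)
  simp only [Nat.add_sub_cancel] at h2
  calc ((n:ℝ)+1) * |e (n+1)| ≤ ((n:ℝ)+1) * (D * C^(n+1) / n.factorial) :=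
        mul_le_mul_of_nonneg_left h2 (by positivity)
    _ ≤ (2*D*C + D) * (2*C)^n / (n-1).factorial := by
        cases n with
        | zero =>
          simp only [Nat.cast_zero, zero_add, pow_one, pow_zero, Nat.zero_sub,
            Nat.factorial_zero, Nat.cast_one, div_one, one_mul, Nat.factorial_one]
          nlinarith [mul_nonneg hD hC]
        | succ m =>
          have hf : (((m+1).factorial : ℕ) : ℝ) = ((m:ℝ)+1) * (m.factorial:ℝ) := by
            rw [Nat.factorial_succ]; push_cast; ring
          have hfpos : (0:ℝ) < (m.factorial:ℝ) := by positivity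
          have hT : (1:ℝ) ≤ 2^(m+1) := one_le_pow₀ (by norm_num)
          have hCp : (0:ℝ) ≤ C^(m+1) := by positivity
          simp only [Nat.add_sub_cancel, Nat.cast_add, Nat.cast_one]
          rw [mul_div_assoc', hf, div_le_div_iff₀ (by positivity) hfpos]
          have hCC : C^(m+1+1) = C*C^(m+1) := by rw [pow_succ]; ring
          have h2pow : (2*C)^(m+1) = 2^(m+1) * C^(m+1) := mul_pow 2 C (m+1)
          rw [hCC, h2pow]
          have h1 : (0:ℝ) ≤ (D*C*C^(m+1)*(m.factorial:ℝ)) * (m:ℝ) := by positivity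
          have h2 : (0:ℝ) ≤ (2^(m+1) - 1) * ((D*C*C^(m+1)*(m.factorial:ℝ)) * ((m:ℝ)+1)) := by
            apply mul_nonneg (by linarith) (by positivity)
          have h3 : (0:ℝ) ≤ D * (2^(m+1) * (C^(m+1) * (((m:ℝ)+1) * (m.factorial:ℝ)))) := by
            positivity
          nlinarith [h1, h2, h3]

lemma Maj.mul_n {e : ℕ → ℝ} {D C : ℝ} (h : Maj e D C) :
    Maj (fun n => (n:ℝ) * e n) D (2*C) := by
  obtain ⟨hD, hC, hb⟩ := h
  refine ⟨hD, by positivity, fun n => ?_⟩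
  rw [abs_mul, abs_of_nonneg (Nat.cast_nonneg n : (0:ℝ) ≤ n)]
  calc (n:ℝ) * |e n| ≤ 2^n * (D * C^n / (n-1).factorial) := by
        apply mul_le_mul (nat_le_two_pow n) (hb n) (abs_nonneg _) (by positivity)
    _ = D * (2*C)^n / (n-1).factorial := by rw [mul_pow]; ring


lemma Maj.summable_sh_eval {e : ℕ → ℝ} {D C : ℝ} (h : Maj e D C) (t : ℝ) :
    Summable (fun n => e n * ((n:ℝ) * t ^ (n-1))) := by
  apply Summable.of_abs
  have h1 : Summable (fun n : ℕ => |(n:ℝ) * e n| * (|t|+1) ^ n) :=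
    h.mul_n.summable (by positivity)
  refine Summable.of_nonneg_of_le (fun n => abs_nonneg _) (fun n => ?_) h1
  rw [abs_mul, abs_mul, abs_mul, abs_pow]
  have hR1 : (1:ℝ) ≤ |t| + 1 := by linarith [abs_nonneg t]
  have habs : |t| ≤ |t| + 1 := by linarith
  calc |e n| * (|(n:ℝ)| * |t| ^ (n-1)) ≤ |e n| * (|(n:ℝ)| * (|t|+1) ^ n) := by
        gcongr
        calc |t| ^ (n-1) ≤ (|t|+1) ^ (n-1) :=
              pow_le_pow_left₀ (abs_nonneg t) (by linarith) _
          _ ≤ (|t|+1) ^ n := pow_le_pow_right₀ hR1 (Nat.sub_le n 1)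
    _ = |(n:ℝ)| * |e n| * (|t|+1) ^ n := by ring

lemma Maj.hasDerivAt_S {e : ℕ → ℝ} {D C : ℝ} (h : Maj e D C) (t : ℝ) :
    HasDerivAt (S e) (S (KummerAux.sh e) t) t := by
  set R := |t| + 1 with hR
  have hR0 : (0:ℝ) < R := by positivity
  have hR1 : (1:ℝ) ≤ R := by rw [hR]; linarith [abs_nonneg t]
  have hmem : t ∈ Ioo (-R) R := by
    constructor
    · have := neg_abs_le t; simp [hR]; linarith
    · have := le_abs_self t; simp [hR]; linarith
  have key : HasDerivAt (fun z => ∑' n, e n * z ^ n)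
      (∑' n, e n * ((n:ℝ) * t ^ (n-1))) t := by
    apply hasDerivAt_tsum_of_isPreconnected
      (u := fun n : ℕ => |(n:ℝ) * e n| * R ^ n)
      (h.mul_n.summable hR0.le) isOpen_Ioo (convex_Ioo _ _).isPreconnected
      (fun n y _ => (hasDerivAt_pow n y).const_mul (e n))
      (fun n y hy => ?_) hmem (h.summable_S t) hmem
    have hy' : |y| ≤ R := by
      rw [abs_le]; exact ⟨hy.1.le, hy.2.le⟩
    rw [Real.norm_eq_abs, abs_mul, abs_mul, abs_pow]
    calc |e n| * (|(n:ℝ)| * |y| ^ (n-1)) ≤ |e n| * (|(n:ℝ)| * R ^ n) := by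
          gcongr
          calc |y| ^ (n-1) ≤ R ^ (n-1) :=
              pow_le_pow_left₀ (abs_nonneg y) hy' _
            _ ≤ R ^ n := pow_le_pow_right₀ hR1 (Nat.sub_le n 1)
      _ = |(n:ℝ) * e n| * R ^ n := by rw [abs_mul]; ring
  have heq : (∑' n, e n * ((n:ℝ) * t ^ (n-1))) = S (KummerAux.sh e) t := by
    rw [Summable.tsum_eq_zero_add (h.summable_sh_eval t)]
    simp only [Nat.cast_zero, zero_mul, mul_zero, zero_add]
    rw [S]
    apply tsum_congr
    intro n
    simp only [KummerAux.sh, Nat.add_sub_cancel]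
    push_cast
    ring
  rw [heq] at key
  exact key

lemma S_zero (e : ℕ → ℝ) : S e 0 = e 0 := by
  rw [S, tsum_eq_single 0 (fun n hn => by simp [zero_pow hn])]
  simp

/-- prepend a zero to a coefficient sequence -/
def up (e : ℕ → ℝ) : ℕ → ℝ := fun n => if n = 0 then 0 else e (n-1)

lemma summable_up {e : ℕ → ℝ} {t : ℝ} (h : Summable (fun n => e n * t ^ n)) :
    Summable (fun n => up e n * t ^ n) := by
  rw [← summable_nat_add_iff 1]
  refine (h.mul_right t).congr fun n => ?_
  simp only [up, Nat.add_sub_cancel, Nat.succ_ne_zero, if_false]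
  rw [pow_succ]
  ring

lemma S_up {e : ℕ → ℝ} (t : ℝ) (h : Summable (fun n => e n * t ^ n)) :
    S (up e) t = t * S e t := by
  rw [S, Summable.tsum_eq_zero_add (summable_up h)]
  have h0 : up e 0 * t ^ 0 = 0 := by simp [up]
  rw [h0, zero_add, S, ← tsum_mul_left]
  apply tsum_congr
  intro n
  simp only [up, Nat.add_sub_cancel, Nat.succ_ne_zero, if_false]
  rw [pow_succ]
  ring


/-! ### Kummer coefficients -/

noncomputable def cc (a b : ℝ) : ℕ → ℝ := fun n => P n a / (P n b * n.factorial)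
noncomputable def dd (a b : ℝ) : ℕ → ℝ := fun n => Pd n a / (P n b * n.factorial)

lemma bound_core {b : ℝ} (hb : 0 < b) (A : ℝ) (hA : 0 ≤ A) (n : ℕ) :
    (A + (n:ℝ)) ^ n / (P n b * (n.factorial:ℝ)) ≤
      (1 + 1/b) * (3*(A+1)) ^ n / ((n-1).factorial : ℝ) := by
  cases n with
  | zero =>
    simp only [Nat.cast_zero, add_zero, pow_zero, P_zero, Nat.factorial_zero, Nat.cast_one,
      mul_one, Nat.zero_sub, div_one]
    have : 0 < 1/b := by positivity
    linarith
  | succ k =>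
    have hPpos : (0:ℝ) < P (k+1) b := P_pos hb _
    have hfme : (0:ℝ) < ((k+1).factorial : ℝ) := by positivity
    have hfk : (0:ℝ) < (k.factorial : ℝ) := by positivity
    have hnum : (A + ((k+1:ℕ):ℝ)) ^ (k+1) ≤ (3*(A+1)) ^ (k+1) * ((k+1).factorial : ℝ) := by
      have e1 : A + ((k+1:ℕ):ℝ) ≤ (A+1) * ((k+1:ℕ):ℝ) := by
        push_cast
        nlinarith [mul_nonneg hA (Nat.cast_nonneg k : (0:ℝ) ≤ k)]
      calc (A + ((k+1:ℕ):ℝ))^(k+1) ≤ ((A+1) * ((k+1:ℕ):ℝ))^(k+1) :=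
            pow_le_pow_left₀ (by positivity) e1 _
        _ = (A+1)^(k+1) * ((k+1:ℕ):ℝ)^(k+1) := mul_pow _ _ _
        _ ≤ (A+1)^(k+1) * (3^(k+1) * ((k+1).factorial : ℝ)) :=
            mul_le_mul_of_nonneg_left (pow_self_le (k+1)) (by positivity)
        _ = (3*(A+1))^(k+1) * ((k+1).factorial : ℝ) := by rw [mul_pow]; ring
    have hden : b * (k.factorial:ℝ) * ((k+1).factorial:ℝ) ≤ P (k+1) b * ((k+1).factorial:ℝ) :=
      mul_le_mul_of_nonneg_right (P_fact_le hb k) hfme.le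
    simp only [Nat.add_sub_cancel]
    calc (A + ((k+1:ℕ):ℝ)) ^ (k+1) / (P (k+1) b * ((k+1).factorial:ℝ))
        ≤ ((3*(A+1))^(k+1) * ((k+1).factorial : ℝ)) / (b * (k.factorial:ℝ) * ((k+1).factorial:ℝ)) :=
          div_le_div₀ (by positivity) hnum (by positivity) hden
      _ = (1/b) * (3*(A+1))^(k+1) / (k.factorial:ℝ) := by
          field_simp
      _ ≤ (1 + 1/b) * (3*(A+1))^(k+1) / (k.factorial:ℝ) := by
          have hX : (0:ℝ) ≤ (3*(A+1))^(k+1) := by positivity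
          exact div_le_div₀ (by positivity) (by nlinarith [hX]) hfk le_rfl

lemma maj_cc (a : ℝ) {b : ℝ} (hb : 0 < b) : Maj (cc a b) (1 + 1/b) (3*(|a|+1)) := by
  refine ⟨by positivity, by positivity, fun n => ?_⟩
  have hpos : (0:ℝ) < P n b * (n.factorial:ℝ) := mul_pos (P_pos hb n) (by positivity)
  have h1 : |cc a b n| ≤ (|a| + (n:ℝ))^n / (P n b * (n.factorial:ℝ)) := by
    rw [cc, abs_div, abs_of_pos hpos]
    exact div_le_div₀ (by positivity) (abs_P_le n a) hpos le_rfl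
  exact h1.trans (bound_core hb |a| (abs_nonneg a) n)

lemma maj_dd (a : ℝ) {b : ℝ} (hb : 0 < b) : Maj (dd a b) (1 + 1/b) (6*(|a|+1)) := by
  refine ⟨by positivity, by positivity, fun n => ?_⟩
  have hpos : (0:ℝ) < P n b * (n.factorial:ℝ) := mul_pos (P_pos hb n) (by positivity)
  have h1 : |dd a b n| ≤ (n:ℝ) * ((|a| + (n:ℝ))^n / (P n b * (n.factorial:ℝ))) := by
    rw [dd, abs_div, abs_of_pos hpos, ← mul_div_assoc]
    exact div_le_div₀ (by positivity) (abs_Pd_le n a) hpos le_rfl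
  have h2 : (n:ℝ) * ((|a| + (n:ℝ))^n / (P n b * (n.factorial:ℝ)))
      ≤ 2^n * ((1 + 1/b) * (3*(|a|+1))^n / ((n-1).factorial : ℝ)) := by
    apply mul_le_mul (nat_le_two_pow n) (bound_core hb |a| (abs_nonneg a) n)
      (by positivity) (by positivity)
  refine h1.trans (h2.trans ?_)
  rw [show (6:ℝ)*(|a|+1) = 2*(3*(|a|+1)) by ring, mul_pow 2 (3*(|a|+1)) n]
  ring_nf
  exact le_rfl

lemma cc_rec (a : ℝ) {b : ℝ} (hb : 0 < b) (n : ℕ) :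
    ((n:ℝ)+1) * (b + (n:ℝ)) * cc a b (n+1) = (a + (n:ℝ)) * cc a b n := by
  have h1 : P n b ≠ 0 := (P_pos hb n).ne'
  have h2 : (b + (n:ℝ)) ≠ 0 := by positivity
  have h3 : ((n.factorial : ℕ):ℝ) ≠ 0 := by positivity
  have h4 : ((n:ℝ)+1) ≠ 0 := by positivity
  simp only [cc, P_succ, Nat.factorial_succ]
  push_cast
  field_simp

lemma dd_rec (a : ℝ) {b : ℝ} (hb : 0 < b) (n : ℕ) :
    ((n:ℝ)+1) * (b + (n:ℝ)) * dd a b (n+1) = (a + (n:ℝ)) * dd a b n + cc a b n := by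
  have h1 : P n b ≠ 0 := (P_pos hb n).ne'
  have h2 : (b + (n:ℝ)) ≠ 0 := by positivity
  have h3 : ((n.factorial : ℕ):ℝ) ≠ 0 := by positivity
  have h4 : ((n:ℝ)+1) ≠ 0 := by positivity
  simp only [cc, dd, P_succ, Pd_succ, Nat.factorial_succ]
  push_cast
  field_simp

/-! ### The hypergeometric ODE, term by term -/

lemma ode_general {e g : ℕ → ℝ} {D C D' C' : ℝ} (he : Maj e D C) (hg : Maj g D' C')
    (a b : ℝ)
    (hrec : ∀ n : ℕ, ((n:ℝ)+1) * (b + (n:ℝ)) * e (n+1) = (a + (n:ℝ)) * e n + g n)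
    (t : ℝ) :
    t * S (sh (sh e)) t + (b - t) * S (sh e) t - a * S e t = S g t := by
  have m1 : Maj (sh e) _ _ := he.sh
  have m2 : Maj (sh (sh e)) _ _ := m1.sh
  have s0 : Summable (fun n => e n * t^n) := he.summable_S t
  have s1 : Summable (fun n => sh e n * t^n) := m1.summable_S t
  have s2 : Summable (fun n => sh (sh e) n * t^n) := m2.summable_S t
  have su1 : Summable (fun n => up (sh e) n * t^n) := summable_up s1
  have su2 : Summable (fun n => up (sh (sh e)) n * t^n) := summable_up s2
  have key : S (up (sh (sh e))) t + b * S (sh e) t - S (up (sh e)) t - a * S e t = S g t := by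
    have hb' : b * S (sh e) t = ∑' n, b * (sh e n * t^n) := (tsum_mul_left).symm
    have ha' : a * S e t = ∑' n, a * (e n * t^n) := (tsum_mul_left).symm
    rw [hb', ha',
      show S (up (sh (sh e))) t = ∑' n, up (sh (sh e)) n * t^n from rfl,
      show S (up (sh e)) t = ∑' n, up (sh e) n * t^n from rfl,
      show S g t = ∑' n, g n * t^n from rfl,
      ← Summable.tsum_add su2 (s1.mul_left b),
      ← Summable.tsum_sub (su2.add (s1.mul_left b)) su1,
      ← Summable.tsum_sub ((su2.add (s1.mul_left b)).sub su1) (s0.mul_left a)]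
    apply tsum_congr
    intro n
    cases n with
    | zero =>
      have h0 := hrec 0
      simp only [Nat.cast_zero, zero_add, one_mul, add_zero] at h0
      simp [up, KummerAux.sh]
      linear_combination h0
    | succ m =>
      have hm := hrec (m+1)
      simp only [up, Nat.succ_ne_zero, if_false, Nat.add_sub_cancel, KummerAux.sh]
      push_cast
      push_cast at hm
      linear_combination (t^(m+1)) * hm
  calc t * S (sh (sh e)) t + (b - t) * S (sh e) t - a * S e t
      = S (up (sh (sh e))) t + b * S (sh e) t - S (up (sh e)) t - a * S e t := by
        rw [S_up t s2, S_up t s1]; ring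
    _ = S g t := key

lemma maj_zero : Maj (fun _ => (0:ℝ)) 0 0 :=
  ⟨le_rfl, le_rfl, fun n => by simp⟩

lemma S_zero_fun (t : ℝ) : S (fun _ => (0:ℝ)) t = 0 := by simp [S]

lemma ode_cc (a : ℝ) {b : ℝ} (hb : 0 < b) (t : ℝ) :
    t * S (sh (sh (cc a b))) t + (b - t) * S (sh (cc a b)) t - a * S (cc a b) t = 0 := by
  have := ode_general (maj_cc a hb) maj_zero a b
    (fun n => by rw [cc_rec a hb n]; ring) t
  rwa [S_zero_fun] at this

lemma ode_dd (a : ℝ) {b : ℝ} (hb : 0 < b) (t : ℝ) :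
    t * S (sh (sh (dd a b))) t + (b - t) * S (sh (dd a b)) t - a * S (dd a b) t
      = S (cc a b) t :=
  ode_general (maj_dd a hb) (maj_cc a hb) a b (fun n => dd_rec a hb n) t


lemma kummer_eq_S (a b t : ℝ) : kummerM a b t = S (cc a b) t := rfl

lemma hasDerivAt_kummer_a {b : ℝ} (hb : 0 < b) (a t : ℝ) :
    HasDerivAt (fun a' => kummerM a' b t) (S (dd a b) t) a := by
  have hu : Summable (fun n : ℕ =>
      ((n:ℝ) * ((|a| + 1 + (n:ℝ)) ^ n / (P n b * (n.factorial:ℝ)))) * |t| ^ n) := by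
    refine Summable.of_nonneg_of_le (fun n => ?_) (fun n => ?_)
      ((summable_base ((1 + 1/b)) (6*(|a|+1+1) * |t|) (by positivity)).congr
        (fun n => rfl))
    · have := (P_pos hb n).le
      positivity
    · have hpos : (0:ℝ) < P n b * (n.factorial:ℝ) := mul_pos (P_pos hb n) (by positivity)
      have h2' : (n:ℝ) * ((|a| + 1 + (n:ℝ)) ^ n / (P n b * (n.factorial:ℝ)))
          ≤ 2^n * ((1 + 1/b) * (3*((|a|+1)+1))^n / ((n-1).factorial : ℝ)) :=
        mul_le_mul (nat_le_two_pow n) (bound_core hb (|a|+1) (by positivity) n)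
          (div_nonneg (by positivity) hpos.le) (by positivity)
      calc ((n:ℝ) * ((|a| + 1 + (n:ℝ)) ^ n / (P n b * (n.factorial:ℝ)))) * |t| ^ n
          ≤ (2^n * ((1 + 1/b) * (3*((|a|+1)+1))^n / ((n-1).factorial : ℝ))) * |t| ^ n :=
            mul_le_mul_of_nonneg_right h2' (by positivity)
        _ = (1 + 1/b) * (6*(|a|+1+1) * |t|) ^ n / ((n-1).factorial : ℝ) := by
            rw [show (6:ℝ)*(|a|+1+1) * |t| = 2 * ((3*((|a|+1)+1)) * |t|) by ring,
              mul_pow 2 ((3*((|a|+1)+1)) * |t|) n, mul_pow (3*((|a|+1)+1)) |t| n]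
            ring
  have key : HasDerivAt (fun a' => ∑' n, P n a' / (P n b * (n.factorial:ℝ)) * t ^ n)
      (∑' n, Pd n a / (P n b * (n.factorial:ℝ)) * t ^ n) a := by
    apply hasDerivAt_tsum_of_isPreconnected hu isOpen_Ioo
      (convex_Ioo (a-1) (a+1)).isPreconnected
      (fun n y _ => ((hasDerivAt_P n y).div_const _).mul_const _)
      (fun n y hy => ?_) (show a ∈ Ioo (a-1) (a+1) by constructor <;> linarith)
      ((maj_cc a hb).summable_S t) (show a ∈ Ioo (a-1) (a+1) by constructor <;> linarith)
    have hyabs : |y| ≤ |a| + 1 := by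
      rw [abs_le]
      obtain ⟨hy1, hy2⟩ := hy
      have := abs_nonneg a
      have := le_abs_self a
      have := neg_abs_le a
      constructor <;> linarith
    have hPd : |Pd n y| ≤ (n:ℝ) * (|a| + 1 + (n:ℝ))^n := by
      refine (abs_Pd_le n y).trans ?_
      apply mul_le_mul_of_nonneg_left _ (Nat.cast_nonneg n)
      exact pow_le_pow_left₀ (by positivity) (by linarith) n
    have hpos : (0:ℝ) < P n b * (n.factorial:ℝ) := mul_pos (P_pos hb n) (by positivity)
    rw [Real.norm_eq_abs, abs_mul, abs_div, abs_of_pos hpos, abs_pow]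
    calc |Pd n y| / (P n b * (n.factorial:ℝ)) * |t| ^ n
        ≤ ((n:ℝ) * (|a| + 1 + (n:ℝ))^n) / (P n b * (n.factorial:ℝ)) * |t| ^ n := by
          apply mul_le_mul_of_nonneg_right _ (by positivity)
          exact div_le_div₀ (by positivity) hPd hpos le_rfl
      _ = ((n:ℝ) * ((|a| + 1 + (n:ℝ)) ^ n / (P n b * (n.factorial:ℝ)))) * |t| ^ n := by
          ring
  exact key

end KummerAux

set_option maxHeartbeats 1000000 in
open KummerAux MeasureTheory intervalIntegral in
/-- For `b, x > 0`, a negative `a`-zero of `M(·,b,x)` is simple: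
`∂M/∂a(a,b,x) ≠ 0`; indeed
`∫₀ˣ t^{b-1} e^{-t} M(a,b,t)² dt = -x^b e^{-x} · ∂ₐM(a,b,x) · ∂ₓM(a,b,x)`. -/
theorem kummerM_zero_simple (b x : ℝ) (hb : 0 < b) (hx : 0 < x)
    (a : ℝ) (ha : a < 0) (hzero : kummerM a b x = 0) :
    (∫ t in (0 : ℝ)..x, t ^ (b - 1) * Real.exp (-t) * (kummerM a b t) ^ 2) =
      -(x ^ b * Real.exp (-x)) *
        deriv (fun a' : ℝ => kummerM a' b x) a * deriv (fun x' : ℝ => kummerM a b x') x ∧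
    deriv (fun a' : ℝ => kummerM a' b x) a ≠ 0 := by
  classical
  set e : ℕ → ℝ := KummerAux.cc a b with he
  set d : ℕ → ℝ := KummerAux.dd a b with hd
  have mc : Maj e _ _ := maj_cc a hb
  have md : Maj d _ _ := maj_dd a hb
  have hF : ∀ t, HasDerivAt (S e) (S (sh e) t) t := fun t => mc.hasDerivAt_S t
  have hF1 : ∀ t, HasDerivAt (S (sh e)) (S (sh (sh e)) t) t := fun t => mc.sh.hasDerivAt_S t
  have hG : ∀ t, HasDerivAt (S d) (S (sh d) t) t := fun t => md.hasDerivAt_S t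
  have hG1 : ∀ t, HasDerivAt (S (sh d)) (S (sh (sh d)) t) t := fun t => md.sh.hasDerivAt_S t
  have hkum : (fun t => kummerM a b t) = S e := funext fun t => kummer_eq_S a b t
  have hderiva : deriv (fun a' => kummerM a' b x) a = S d x :=
    (hasDerivAt_kummer_a hb a x).deriv
  have hderivx : deriv (fun x' => kummerM a b x') x = S (sh e) x := by
    rw [show (fun x' => kummerM a b x') = S e from hkum]
    exact (hF x).deriv
  have hFx0 : S e x = 0 := by rw [← kummer_eq_S]; exact hzero
  -- continuity of the building blocks
  have cF : Continuous (S e) := continuous_iff_continuousAt.2 fun t => (hF t).continuousAt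
  have cF1 : Continuous (S (sh e)) := continuous_iff_continuousAt.2 fun t => (hF1 t).continuousAt
  have cG : Continuous (S d) := continuous_iff_continuousAt.2 fun t => (hG t).continuousAt
  have cG1 : Continuous (S (sh d)) := continuous_iff_continuousAt.2 fun t => (hG1 t).continuousAt
  -- the Wronskian-type function
  set W : ℝ → ℝ := fun t =>
    t ^ b * Real.exp (-t) * (S (sh d) t * S e t - S d t * S (sh e) t) with hWdef
  have hexp : ∀ t : ℝ, HasDerivAt (fun s : ℝ => Real.exp (-s)) (-Real.exp (-t)) t := by
    intro t
    simpa using ((hasDerivAt_id t).neg).exp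
  have hWderiv : ∀ t ∈ Set.Ioo 0 x,
      HasDerivAt W (t ^ (b-1) * Real.exp (-t) * (S e t)^2) t := by
    intro t ht
    have ht0 : (0:ℝ) < t := ht.1
    have h1 : HasDerivAt (fun s : ℝ => s ^ b) (b * t ^ (b-1)) t :=
      Real.hasDerivAt_rpow_const (Or.inl ht0.ne')
    have h3 : HasDerivAt (fun s => S (sh d) s * S e s - S d s * S (sh e) s)
        (S (sh (sh d)) t * S e t - S d t * S (sh (sh e)) t) t := by
      have := ((hG1 t).mul (hF t)).sub ((hG t).mul (hF1 t))
      refine this.congr_deriv ?_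
      ring
    have h := (h1.mul (hexp t)).mul h3
    have hpowsplit : t ^ b = t ^ (b - 1) * t := by
      nth_rewrite 1 [show b = (b-1) + 1 by ring]
      rw [Real.rpow_add ht0, Real.rpow_one]
    have odeF := ode_cc a hb t
    have odeG := ode_dd a hb t
    rw [← he] at odeF
    rw [← hd, ← he] at odeG
    refine h.congr_deriv (Eq.symm ?_)
    simp only [Pi.mul_apply]
    rw [hpowsplit]
    linear_combination (-(t^(b-1) * Real.exp (-t) * S e t)) * odeG
      + (t^(b-1) * Real.exp (-t) * S d t) * odeF
  have hWcont : ContinuousOn W (Set.Icc 0 x) := by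
    apply ContinuousOn.mul (ContinuousOn.mul ?_ ?_) ?_
    · intro t _
      exact (Real.continuousAt_rpow_const t b (Or.inr hb.le)).continuousWithinAt
    · exact (Real.continuous_exp.comp continuous_neg).continuousOn
    · exact ((cG1.mul cF).sub (cG.mul cF1)).continuousOn
  -- integrability of the integrand
  set φ : ℝ → ℝ := fun t => t ^ (b-1) * Real.exp (-t) * (S e t)^2 with hφdef
  have hcont2 : Continuous (fun t => Real.exp (-t) * (S e t)^2) :=
    (Real.continuous_exp.comp continuous_neg).mul (cF.pow 2)
  obtain ⟨M, hM⟩ := isCompact_Icc.exists_bound_of_continuousOn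
    (s := Set.Icc (0:ℝ) x) hcont2.continuousOn
  have hM0 : 0 ≤ M := le_trans (norm_nonneg _) (hM 0 ⟨le_rfl, hx.le⟩)
  have hφcontOn : ContinuousOn φ (Set.Ioc 0 x) := by
    apply ContinuousOn.mul (ContinuousOn.mul ?_ ?_) ?_
    · intro t ht
      exact (Real.continuousAt_rpow_const t (b-1) (Or.inl ht.1.ne')).continuousWithinAt
    · exact (Real.continuous_exp.comp continuous_neg).continuousOn
    · exact (cF.pow 2).continuousOn
  have hint : IntervalIntegrable φ volume 0 x := by
    have hg : IntervalIntegrable (fun t => M * t^(b-1)) volume 0 x :=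
      (intervalIntegrable_rpow' (by linarith)).const_mul M
    refine IntervalIntegrable.mono_fun hg ?_ ?_
    · rw [Set.uIoc_of_le hx.le]
      exact hφcontOn.aestronglyMeasurable measurableSet_Ioc
    · rw [Filter.EventuallyLE, Set.uIoc_of_le hx.le]
      filter_upwards [ae_restrict_mem measurableSet_Ioc] with t ht
      have h1 : (0:ℝ) ≤ t^(b-1) := Real.rpow_nonneg ht.1.le _
      calc ‖φ t‖ = t^(b-1) * ‖Real.exp (-t) * (S e t)^2‖ := by
            rw [hφdef]
            simp only [Real.norm_eq_abs]
            rw [mul_assoc, abs_mul, abs_of_nonneg h1]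
        _ ≤ t^(b-1) * M := mul_le_mul_of_nonneg_left (hM t ⟨ht.1.le, ht.2⟩) h1
        _ = ‖M * t^(b-1)‖ := by
            rw [Real.norm_eq_abs, abs_of_nonneg (mul_nonneg hM0 h1)]
            ring
  -- FTC
  have hFTC : (∫ t in (0:ℝ)..x, φ t) = W x - W 0 :=
    integral_eq_sub_of_hasDeriv_right_of_le hx.le hWcont
      (fun t ht => (hWderiv t ht).hasDerivWithinAt) hint
  have hW0 : W 0 = 0 := by
    rw [hWdef]
    simp [Real.zero_rpow hb.ne']
  have hWx : W x = -(x ^ b * Real.exp (-x)) * S d x * S (sh e) x := by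
    rw [hWdef]
    simp only
    rw [hFx0]
    ring
  have hmain : (∫ t in (0:ℝ)..x, φ t)
      = -(x ^ b * Real.exp (-x)) * S d x * S (sh e) x := by
    rw [hFTC, hW0, hWx]
    ring
  -- positivity of the integral
  have hF0 : S e 0 = 1 := by
    rw [S_zero, he]
    simp [KummerAux.cc, P_zero]
  have hpre : S e ⁻¹' (Set.Ioi 0) ∈ nhds (0:ℝ) := by
    apply cF.continuousAt.preimage_mem_nhds
    rw [hF0]
    exact Ioi_mem_nhds one_pos
  obtain ⟨δ, hδpos, hδ⟩ := Metric.mem_nhds_iff.mp hpre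
  set ε : ℝ := min (δ/2) x with hεdef
  have hεpos : 0 < ε := lt_min (by linarith) hx
  have hεx : ε ≤ x := min_le_right _ _
  have hFpos : ∀ t ∈ Set.Ioo (0:ℝ) ε, 0 < S e t := by
    intro t ht
    apply hδ
    rw [Metric.mem_ball, Real.dist_eq, sub_zero, abs_of_pos ht.1]
    have := ht.2
    have : t < δ/2 := lt_of_lt_of_le this (min_le_left _ _)
    linarith
  have hint1 : IntervalIntegrable φ volume 0 ε := by
    apply hint.mono_set
    rw [Set.uIcc_of_le hεpos.le, Set.uIcc_of_le hx.le]
    exact Set.Icc_subset_Icc le_rfl hεx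
  have hint2 : IntervalIntegrable φ volume ε x := by
    apply hint.mono_set
    rw [Set.uIcc_of_le hεx, Set.uIcc_of_le hx.le]
    exact Set.Icc_subset_Icc hεpos.le le_rfl
  have hpos1 : 0 < ∫ t in (0:ℝ)..ε, φ t := by
    apply intervalIntegral_pos_of_pos_on hint1 _ hεpos
    intro t ht
    rw [hφdef]
    have h1 : 0 < t ^ (b-1) := Real.rpow_pos_of_pos ht.1 _
    have h2 : 0 < Real.exp (-t) := Real.exp_pos _
    have h3 : 0 < (S e t)^2 := pow_pos (hFpos t ht) 2
    positivity
  have hpos2 : 0 ≤ ∫ t in ε..x, φ t := by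
    apply intervalIntegral.integral_nonneg hεx
    intro u hu
    rw [hφdef]
    have h1 : (0:ℝ) ≤ u ^ (b-1) := Real.rpow_nonneg (le_trans hεpos.le hu.1) _
    have h2 : (0:ℝ) ≤ Real.exp (-u) := (Real.exp_pos _).le
    positivity
  have hsplit : (∫ t in (0:ℝ)..x, φ t) = (∫ t in (0:ℝ)..ε, φ t) + ∫ t in ε..x, φ t :=
    (integral_add_adjacent_intervals hint1 hint2).symm
  have hposint : 0 < ∫ t in (0:ℝ)..x, φ t := by
    rw [hsplit]; linarith
  have hφint : (∫ t in (0:ℝ)..x, t ^ (b - 1) * Real.exp (-t) * (kummerM a b t) ^ 2)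
      = ∫ t in (0:ℝ)..x, φ t := by
    apply intervalIntegral.integral_congr
    intro t _
    rw [hφdef]
    simp only
    rw [show kummerM a b t = S e t from kummer_eq_S a b t]
  constructor
  · rw [hφint, hmain, hderiva, hderivx]
  · intro hcontra
    rw [hderiva] at hcontra
    rw [hcontra, mul_zero, zero_mul] at hmain
    exact absurd hmain hposint.ne'
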